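/- Let β ∈ (0,1), D ≥ 1, and r ∈ (0,1). If [ln((1−r)/r · (1−β)/β)]² ≥ D/(r(1−r)), then the function e(r) = exp(−D·KL(1−r‖β)) satisfies e″(r) ≥ 0 at that point (e is locally convex). -/

import Mathlib

/-- Binary Kullback–Leibler divergence between Bernoulli(p) and Bernoulli(q). -/
noncomputable def klBer (p q : ℝ) : ℝ := p * Real.log (p / q) + (1 - p) * Real.log ((1 - p) / (1 - q))

theorem stmt_8 (β D : ℝ) (hβ : β ∈ Set.Ioo (0:ℝ) 1) (hD : 1 ≤ D)
    (r : ℝ) (hr : r ∈ Set.Ioo (0:ℝ) 1)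
    (hcond : (Real.log ((1 - r) / r * ((1 - β) / β))) ^ 2 ≥ D / (r * (1 - r))) :
    0 ≤ deriv (deriv (fun x => Real.exp (-(D * klBer (1 - x) β)))) r := by
  obtain ⟨hβ0, hβ1⟩ := hβ
  obtain ⟨hr0, hr1⟩ := hr
  have hβ1' : (0:ℝ) < 1 - β := by linarith
  set L : ℝ → ℝ := fun x => Real.log (1-x) - Real.log x + (Real.log (1-β) - Real.log β) with hLdef
  set F : ℝ → ℝ := fun x => Real.exp (-(D * ((1-x)*(Real.log (1-x) - Real.log β) + x*(Real.log x - Real.log (1-β))))) with hFdef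
  have hmem : Set.Ioo (0:ℝ) 1 ∈ nhds r := isOpen_Ioo.mem_nhds ⟨hr0, hr1⟩
  -- eventual equality of the original function with F
  have heq : (fun x => Real.exp (-(D * klBer (1 - x) β))) =ᶠ[nhds r] F := by
    filter_upwards [hmem] with x hx
    obtain ⟨hx0, hx1⟩ := hx
    simp only [hFdef, klBer]
    congr 1
    have h1 : (1:ℝ) - (1 - x) = x := by ring
    rw [h1, Real.log_div (by linarith) (by linarith), Real.log_div (by linarith) (by linarith)]
    try ring
  -- derivative of F on Ioo 0 1
  have hFd : ∀ x ∈ Set.Ioo (0:ℝ) 1, HasDerivAt F (F x * (D * L x)) x := by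
    intro x hx
    obtain ⟨hx0, hx1⟩ := hx
    have h1x : (0:ℝ) < 1 - x := by linarith
    have hlog1 : HasDerivAt (fun y : ℝ => Real.log (1 - y)) (-(1-x)⁻¹) x := by
      have := (Real.hasDerivAt_log h1x.ne').comp x ((hasDerivAt_id x).const_sub 1)
      simpa [Function.comp_def] using this.neg.neg
    have hA : HasDerivAt (fun y : ℝ => (1-y)*(Real.log (1-y) - Real.log β))
        ((-1)*(Real.log (1-x) - Real.log β) + (1-x)*(-(1-x)⁻¹)) x :=
      HasDerivAt.mul ((hasDerivAt_id x).const_sub 1) (hlog1.sub_const _)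
    have hB : HasDerivAt (fun y : ℝ => y*(Real.log y - Real.log (1-β)))
        (1*(Real.log x - Real.log (1-β)) + x*x⁻¹) x :=
      (hasDerivAt_id x).mul ((Real.hasDerivAt_log hx0.ne').sub_const _)
    have hsum := ((hA.add hB).const_mul D).neg
    have := hsum.exp
    convert this using 1
    case e'_8 => rw [hFdef]; rfl
    simp only [hLdef, hFdef, Pi.neg_apply, Pi.add_apply]
    field_simp
    ring
  -- deriv F equals F * (D * L) eventually
  have hderivF : deriv F =ᶠ[nhds r] (fun x => F x * (D * L x)) := by
    filter_upwards [hmem] with x hx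
    exact (hFd x hx).deriv
  have hstep : deriv (fun x => Real.exp (-(D * klBer (1 - x) β))) =ᶠ[nhds r]
      (fun x => F x * (D * L x)) := heq.deriv.trans hderivF
  rw [hstep.deriv_eq]
  -- compute second derivative at r
  have h1r : (0:ℝ) < 1 - r := by linarith
  have hlog1 : HasDerivAt (fun y : ℝ => Real.log (1 - y)) (-(1-r)⁻¹) r := by
    have := (Real.hasDerivAt_log h1r.ne').comp r ((hasDerivAt_id r).const_sub 1)
    simpa [Function.comp_def] using this.neg.neg
  have hLd : HasDerivAt L (-(1-r)⁻¹ - r⁻¹) r := by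
    simpa [hLdef] using ((hlog1.sub (Real.hasDerivAt_log hr0.ne')).add_const
      (Real.log (1-β) - Real.log β))
  have hFr := hFd r ⟨hr0, hr1⟩
  have h2 : HasDerivAt (fun x => F x * (D * L x))
      ((F r * (D * L r)) * (D * L r) + F r * (D * (-(1-r)⁻¹ - r⁻¹))) r :=
    hFr.mul (hLd.const_mul D)
  rw [h2.deriv]
  -- positivity
  have hLr : Real.log ((1 - r) / r * ((1 - β) / β)) = L r := by
    rw [Real.log_mul (by positivity) (by positivity),
      Real.log_div h1r.ne' hr0.ne', Real.log_div hβ1'.ne' hβ0.ne']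
    try simp [hLdef]
  rw [hLr] at hcond
  have hFpos : 0 < F r := Real.exp_pos _
  have hD0 : (0:ℝ) < D := lt_of_lt_of_le one_pos hD
  have hrr : (0:ℝ) < r * (1 - r) := by positivity
  have hsum : (1-r)⁻¹ + r⁻¹ = (r*(1-r))⁻¹ := by field_simp; ring
  have hcond' : D * (r*(1-r))⁻¹ ≤ (L r)^2 := by
    rw [div_eq_mul_inv] at hcond; exact hcond
  have key : 0 ≤ D^2 * (L r)^2 - D * ((1-r)⁻¹ + r⁻¹) := by
    rw [hsum]
    have ht : (0:ℝ) < (r*(1-r))⁻¹ := by positivity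
    nlinarith [mul_le_mul_of_nonneg_left hcond' (sq_nonneg D), sq_nonneg D,
      mul_pos hD0 ht, sq_nonneg (D-1), sq_nonneg (D+1)]
  have : (F r * (D * L r)) * (D * L r) + F r * (D * (-(1-r)⁻¹ - r⁻¹))
      = F r * (D^2 * (L r)^2 - D * ((1-r)⁻¹ + r⁻¹)) := by ring
  rw [this]
  positivity
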